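/- arXiv:2407.04194 — 2 statements merged into one kernel-verified Lean document; each statement's English description precedes it below -/
import Mathlib

section
/- Fix integers n, M, p ≥ 1 and a real τ > 0. Let (X_i, Y_i)_{i=1}^n ⊂ ℝ^p × {0,1} be observed data and (X*_i, Y*_i)_{i=1}^M ⊂ ℝ^p × {0,1} be synthetic data. Assume: (a) the synthetic data are not separable, i.e., for every nonzero β ∈ ℝ^p there exists i ∈ {1,…,M} with (2Y*_i − 1)⟨X*_i, β⟩ < 0; and (b) the M × p matrix whose i-th row is (X*_i)ᵀ has rank p. Then the function Q(β) = Σ_{i=1}^n log(1 + exp(−(2Y_i − 1)⟨X_i, β⟩)) + (τ/M) Σ_{i=1}^M log(1 + exp(−(2Y*_i − 1)⟨X*_i, β⟩)) attains its infimum over ℝ^p at exactly one point; equivalently, the MAP estimator β̂_M under the catalytic prior exists and is unique. -/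
open scoped RealInnerProductSpace BigOperators

/-- The logistic log-partition function `ρ(t) = log(1 + eᵗ)`. -/
noncomputable def rho (t : ℝ) : ℝ := Real.log (1 + Real.exp t)

/-- The negative log-posterior `Q` for logistic regression under a catalytic prior:
observed data `(X i, Y i)`, synthetic data `(Xs i, Ys i)`, tuning parameter `τ`. -/
noncomputable def Qobj {n M p : ℕ} (τ : ℝ)
    (X : Fin n → EuclideanSpace ℝ (Fin p)) (Y : Fin n → ℝ)
    (Xs : Fin M → EuclideanSpace ℝ (Fin p)) (Ys : Fin M → ℝ)
    (β : EuclideanSpace ℝ (Fin p)) : ℝ :=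
  (∑ i, Real.log (1 + Real.exp (-((2 * Y i - 1) * ⟪X i, β⟫)))) +
    (τ / M) * ∑ i, Real.log (1 + Real.exp (-((2 * Ys i - 1) * ⟪Xs i, β⟫)))

lemma rho_hasDeriv (t : ℝ) : HasDerivAt rho (Real.exp t / (1 + Real.exp t)) t := by
  have h : HasDerivAt (fun t => 1 + Real.exp t) (Real.exp t) t :=
    (Real.hasDerivAt_exp t).const_add 1
  exact h.log (by positivity)

lemma deriv_rho : deriv rho = fun t => Real.exp t / (1 + Real.exp t) :=
  funext fun t => (rho_hasDeriv t).deriv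

lemma rho_strictConvexOn : StrictConvexOn ℝ Set.univ rho := by
  apply strictConvexOn_univ_of_deriv2_pos
  · exact (continuous_const.add Real.continuous_exp).log (fun t => (by positivity : (0:ℝ) < 1 + Real.exp t).ne')
  · intro x
    have h0 : deriv^[2] rho x = deriv (deriv rho) x := rfl
    rw [h0, deriv_rho]
    have h2 : HasDerivAt (fun t => Real.exp t / (1 + Real.exp t))
        ((Real.exp x * (1 + Real.exp x) - Real.exp x * Real.exp x) / (1 + Real.exp x) ^ 2) x :=
      (Real.hasDerivAt_exp x).div ((Real.hasDerivAt_exp x).const_add 1) (by positivity)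
    rw [h2.deriv]
    have h3 : Real.exp x * (1 + Real.exp x) - Real.exp x * Real.exp x = Real.exp x := by ring
    rw [h3]; positivity

lemma rho_nonneg (t : ℝ) : 0 ≤ rho t :=
  Real.log_nonneg (by linarith [Real.exp_pos t])

lemma le_rho (t : ℝ) : t ≤ rho t := by
  have := Real.log_le_log (Real.exp_pos t) (by linarith : Real.exp t ≤ 1 + Real.exp t)
  simpa [Real.log_exp, rho] using this

lemma rho_convex_ineq {a b : ℝ} (ha : 0 ≤ a) (hb : 0 ≤ b) (hab : a + b = 1) (s t : ℝ) :
    rho (a * s + b * t) ≤ a * rho s + b * rho t := by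
  simpa [smul_eq_mul] using
    rho_strictConvexOn.convexOn.2 (Set.mem_univ s) (Set.mem_univ t) ha hb hab

lemma rho_strict_ineq {a b : ℝ} (ha : 0 < a) (hb : 0 < b) (hab : a + b = 1) {s t : ℝ}
    (hst : s ≠ t) : rho (a * s + b * t) < a * rho s + b * rho t := by
  simpa [smul_eq_mul] using
    rho_strictConvexOn.2 (Set.mem_univ s) (Set.mem_univ t) hst ha hb hab

/-- **Existence and uniqueness of the MAP estimator under a catalytic prior**
(logistic regression).  If the synthetic data are not separable and the synthetic
covariate matrix has full column rank `p`, then the objective `Q` attains its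
infimum over `ℝ^p` at exactly one point. -/
theorem stmt0 (n M p : ℕ) (hn : 1 ≤ n) (hM : 1 ≤ M) (hp : 1 ≤ p)
    (τ : ℝ) (hτ : 0 < τ)
    (X : Fin n → EuclideanSpace ℝ (Fin p)) (Y : Fin n → ℝ)
    (hY : ∀ i, Y i = 0 ∨ Y i = 1)
    (Xs : Fin M → EuclideanSpace ℝ (Fin p)) (Ys : Fin M → ℝ)
    (hYs : ∀ i, Ys i = 0 ∨ Ys i = 1)
    (hnonsep : ∀ β : EuclideanSpace ℝ (Fin p), β ≠ 0 →
      ∃ i : Fin M, (2 * Ys i - 1) * ⟪Xs i, β⟫ < 0)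
    (hrank : (Matrix.of (fun (i : Fin M) (j : Fin p) => Xs i j)).rank = p) :
    ∃! b : EuclideanSpace ℝ (Fin p),
      ∀ β : EuclideanSpace ℝ (Fin p), Qobj τ X Y Xs Ys b ≤ Qobj τ X Y Xs Ys β := by
  classical
  haveI : Nonempty (Fin M) := ⟨⟨0, hM⟩⟩
  set Q : EuclideanSpace ℝ (Fin p) → ℝ := Qobj τ X Y Xs Ys with hQdef
  have hMpos : (0:ℝ) < M := by exact_mod_cast Nat.lt_of_lt_of_le Nat.zero_lt_one hM
  have hc : 0 < τ / M := div_pos hτ hMpos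
  have hQeq : ∀ β : EuclideanSpace ℝ (Fin p),
      Q β = (∑ i, rho (-((2 * Y i - 1) * ⟪X i, β⟫))) +
      (τ / M) * ∑ i, rho (-((2 * Ys i - 1) * ⟪Xs i, β⟫)) := fun β => rfl
  -- continuity
  have hF : ∀ (c : ℝ) (v : EuclideanSpace ℝ (Fin p)),
      Continuous fun β : EuclideanSpace ℝ (Fin p) => rho (-(c * ⟪v, β⟫)) := by
    intro c v
    have h1 : Continuous fun β : EuclideanSpace ℝ (Fin p) => -(c * ⟪v, β⟫) :=
      (continuous_const.mul ((continuous_const (y := v)).inner continuous_id)).neg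
    exact ((continuous_const.add (Real.continuous_exp.comp h1)).log
      fun β => (by positivity : (0:ℝ) < 1 + Real.exp (-(c * ⟪v, β⟫))).ne')
  have hQcont : Continuous Q := by
    have h1 : Continuous fun β : EuclideanSpace ℝ (Fin p) =>
        ∑ i, rho (-((2 * Y i - 1) * ⟪X i, β⟫)) :=
      continuous_finset_sum _ fun i _ => hF _ _
    have h2 : Continuous fun β : EuclideanSpace ℝ (Fin p) =>
        ∑ i, rho (-((2 * Ys i - 1) * ⟪Xs i, β⟫)) :=
      continuous_finset_sum _ fun i _ => hF _ _
    have h3 : Continuous fun β : EuclideanSpace ℝ (Fin p) =>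
        (∑ i, rho (-((2 * Y i - 1) * ⟪X i, β⟫))) +
        (τ / M) * ∑ i, rho (-((2 * Ys i - 1) * ⟪Xs i, β⟫)) :=
      h1.add (continuous_const.mul h2)
    have : (fun β => (∑ i, rho (-((2 * Y i - 1) * ⟪X i, β⟫))) +
        (τ / M) * ∑ i, rho (-((2 * Ys i - 1) * ⟪Xs i, β⟫))) = Q := by
      funext β; rw [hQeq]
    rwa [this] at h3
  -- strict convexity key inequality
  have key : ∀ x y : EuclideanSpace ℝ (Fin p), x ≠ y → ∀ a b : ℝ, 0 < a → 0 < b → a + b = 1 →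
      Q (a • x + b • y) < a * Q x + b * Q y := by
    intro x y hxy a b ha hb hab
    have harg : ∀ (c : ℝ) (v : EuclideanSpace ℝ (Fin p)), -(c * ⟪v, a • x + b • y⟫) =
        a * (-(c * ⟪v, x⟫)) + b * (-(c * ⟪v, y⟫)) := by
      intro c v
      rw [inner_add_right, real_inner_smul_right, real_inner_smul_right]; ring
    obtain ⟨i0, hi0⟩ := hnonsep (x - y) (sub_ne_zero.mpr hxy)
    have h1 : (∑ i, rho (-((2 * Y i - 1) * ⟪X i, a • x + b • y⟫))) ≤
        a * (∑ i, rho (-((2 * Y i - 1) * ⟪X i, x⟫))) +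
        b * (∑ i, rho (-((2 * Y i - 1) * ⟪X i, y⟫))) := by
      rw [Finset.mul_sum, Finset.mul_sum, ← Finset.sum_add_distrib]
      refine Finset.sum_le_sum fun i _ => ?_
      rw [harg]; exact rho_convex_ineq ha.le hb.le hab _ _
    have h2 : (∑ i, rho (-((2 * Ys i - 1) * ⟪Xs i, a • x + b • y⟫))) <
        a * (∑ i, rho (-((2 * Ys i - 1) * ⟪Xs i, x⟫))) +
        b * (∑ i, rho (-((2 * Ys i - 1) * ⟪Xs i, y⟫))) := by
      rw [Finset.mul_sum, Finset.mul_sum, ← Finset.sum_add_distrib]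
      refine Finset.sum_lt_sum (fun i _ => by
        rw [harg]; exact rho_convex_ineq ha.le hb.le hab _ _)
        ⟨i0, Finset.mem_univ i0, ?_⟩
      rw [harg]
      refine rho_strict_ineq ha hb hab ?_
      have hdiff : -((2 * Ys i0 - 1) * ⟪Xs i0, x⟫) - (-((2 * Ys i0 - 1) * ⟪Xs i0, y⟫)) =
          -((2 * Ys i0 - 1) * ⟪Xs i0, x - y⟫) := by
        rw [inner_sub_right]; ring
      intro h
      rw [h, sub_self] at hdiff
      linarith [hdiff.symm]
    have h2' := mul_lt_mul_of_pos_left h2 hc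
    have hfin := add_lt_add_of_le_of_lt h1 h2'
    calc Q (a • x + b • y) = _ := hQeq _
      _ < _ := hfin
      _ = a * Q x + b * Q y := by rw [hQeq x, hQeq y]; ring
  -- coercivity via compactness of the sphere
  set g : Fin M → EuclideanSpace ℝ (Fin p) → ℝ :=
    fun i u => -((2 * Ys i - 1) * ⟪Xs i, u⟫) with hgdef
  have hgcont : ∀ i, Continuous (g i) := fun i =>
    (continuous_const.mul ((continuous_const (y := Xs i)).inner continuous_id)).neg
  set F : EuclideanSpace ℝ (Fin p) → ℝ :=
    fun u => Finset.univ.sup' Finset.univ_nonempty (fun i => g i u) with hFdef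
  have hFcont : Continuous F := by
    rw [continuous_iff_continuousAt]
    intro x
    exact Filter.Tendsto.finset_sup'_nhds_apply Finset.univ_nonempty
      fun i _ => (hgcont i).continuousAt
  have hsph : IsCompact (Metric.sphere (0:EuclideanSpace ℝ (Fin p)) 1) := isCompact_sphere 0 1
  have hne : (Metric.sphere (0:EuclideanSpace ℝ (Fin p)) 1).Nonempty := by
    refine ⟨EuclideanSpace.single ⟨0, hp⟩ (1:ℝ), ?_⟩
    rw [mem_sphere_zero_iff_norm, EuclideanSpace.norm_single, norm_one]
  obtain ⟨u0, hu0mem, hu0min⟩ := hsph.exists_isMinOn hne hFcont.continuousOn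
  have hu0min' : ∀ u ∈ Metric.sphere (0:EuclideanSpace ℝ (Fin p)) 1, F u0 ≤ F u :=
    fun u hu => hu0min hu
  set ε := F u0 with hεdef
  have hεpos : 0 < ε := by
    have hu0ne : u0 ≠ 0 := by
      intro h
      rw [h, mem_sphere_zero_iff_norm, norm_zero] at hu0mem
      norm_num at hu0mem
    obtain ⟨i, hi⟩ := hnonsep u0 hu0ne
    have h1 : g i u0 ≤ F u0 := by
      rw [hFdef]; exact Finset.le_sup' (fun j => g j u0) (Finset.mem_univ i)
    have h2 : 0 < g i u0 := by simp only [hgdef]; linarith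
    linarith
  have hQnonneg : ∀ β : EuclideanSpace ℝ (Fin p), 0 ≤ Q β := by
    intro β
    rw [hQeq]
    have h1 : 0 ≤ ∑ i, rho (-((2 * Y i - 1) * ⟪X i, β⟫)) :=
      Finset.sum_nonneg fun i _ => rho_nonneg _
    have h2 : 0 ≤ ∑ i, rho (-((2 * Ys i - 1) * ⟪Xs i, β⟫)) :=
      Finset.sum_nonneg fun i _ => rho_nonneg _
    positivity
  have hlb : ∀ β : EuclideanSpace ℝ (Fin p), τ / M * ε * ‖β‖ ≤ Q β := by
    intro β
    rcases eq_or_ne β 0 with rfl | hβ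
    · simpa using hQnonneg 0
    · have hnβ : 0 < ‖β‖ := norm_pos_iff.mpr hβ
      have humem : (‖β‖⁻¹ • β) ∈ Metric.sphere (0:EuclideanSpace ℝ (Fin p)) 1 := by
        rw [mem_sphere_zero_iff_norm]
        exact norm_smul_inv_norm hβ
      have hFu : ε ≤ F (‖β‖⁻¹ • β) := hu0min' _ humem
      obtain ⟨i, _, hFi⟩ := Finset.exists_mem_eq_sup' Finset.univ_nonempty
        (fun j => g j (‖β‖⁻¹ • β))
      have hgi : ε ≤ g i (‖β‖⁻¹ • β) := by rw [hFdef] at hFu; rw [← hFi]; exact hFu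
      have hgiu : g i (‖β‖⁻¹ • β) = ‖β‖⁻¹ * g i β := by
        simp only [hgdef, real_inner_smul_right]; ring
      have hgib : ε * ‖β‖ ≤ g i β := by
        rw [hgiu] at hgi
        have := mul_le_mul_of_nonneg_right hgi hnβ.le
        rwa [mul_comm (‖β‖⁻¹) (g i β), mul_assoc, inv_mul_cancel₀ hnβ.ne', mul_one] at this
      have hterm : ε * ‖β‖ ≤ rho (g i β) := hgib.trans (le_rho _)
      have hsum : rho (g i β) ≤ ∑ j, rho (-((2 * Ys j - 1) * ⟪Xs j, β⟫)) :=
        Finset.single_le_sum (f := fun j => rho (-((2 * Ys j - 1) * ⟪Xs j, β⟫)))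
          (fun j _ => rho_nonneg _) (Finset.mem_univ i)
      have h1 : 0 ≤ ∑ i, rho (-((2 * Y i - 1) * ⟪X i, β⟫)) :=
        Finset.sum_nonneg fun i _ => rho_nonneg _
      have h2 : τ / M * (ε * ‖β‖) ≤ τ / M * ∑ j, rho (-((2 * Ys j - 1) * ⟪Xs j, β⟫)) :=
        mul_le_mul_of_nonneg_left (hterm.trans hsum) hc.le
      rw [hQeq]
      nlinarith
  have hcoer : Filter.Tendsto Q (Filter.cocompact (EuclideanSpace ℝ (Fin p))) Filter.atTop := by
    have hk : 0 < τ / M * ε := by positivity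
    have h0 := (tendsto_norm_cocompact_atTop
      (E := EuclideanSpace ℝ (Fin p))).const_mul_atTop hk
    exact Filter.tendsto_atTop_mono (fun β => hlb β) h0
  obtain ⟨b, hb⟩ := hQcont.exists_forall_le hcoer
  refine ⟨b, hb, ?_⟩
  intro b' hb'
  by_contra hne'
  have hlt := key b' b hne' (1/2) (1/2) (by norm_num) (by norm_num) (by norm_num)
  have h1 := hb ((1/2:ℝ) • b' + (1/2:ℝ) • b)
  have h2 := hb' b
  have h3 := hb b'
  linarith
end

section
/- Let (X*_i, Y*_i), i = 1, …, M, be i.i.d. copies of a pair (X*, Y*) with X* ∈ ℝ^p and Y* ∈ {0,1}. Assume there exist η₀ > 0 and ρ₀ ∈ (0,1] such that P(|⟨X*, β⟩| > η₀) ≥ ρ₀ for every unit vector β ∈ ℝ^p, and there is q ∈ (0,1) with q ≤ P(Y* = 1 | X*) ≤ 1 − q almost surely. Set ν := min(q, 1−q)·ρ₀. Then for every unit vector β ∈ ℝ^p: (a) P( max{0, −(2Y* − 1)⟨X*, β⟩} > η₀ ) ≥ ν, and hence E[ max{0, −(2Y* − 1)⟨X*, β⟩} ] ≥ η₀ν;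 and (b) P( (1/M) Σ_{i=1}^M max{0, −(2Y*_i − 1)⟨X*_i, β⟩} ≥ η₀ν/2 ) ≥ 1 − exp(−Mν²/2). -/
open MeasureTheory ProbabilityTheory
open scoped RealInnerProductSpace BigOperators ENNReal

section part_a

variable {Ω : Type*} [MeasurableSpace Ω] (μ : Measure Ω) [IsProbabilityMeasure μ]
  {p : ℕ} (Xstar : Ω → EuclideanSpace ℝ (Fin p)) (Ystar : Ω → ℝ)

/-- Key measure bound for part (a). -/
lemma partA_key
    (hmeasXst : Measurable Xstar) (hmeasYst : Measurable Ystar)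
    (hYbin : ∀ᵐ ω ∂μ, Ystar ω = 0 ∨ Ystar ω = 1)
    (η₀ ρ₀ q : ℝ) (hη : 0 < η₀) (hρ0 : 0 < ρ₀)
    (hq0 : 0 < q) (hq1 : q < 1)
    (β : EuclideanSpace ℝ (Fin p))
    (hball : ENNReal.ofReal ρ₀ ≤ μ {ω | η₀ < |⟪Xstar ω, β⟫|})
    (hcond : ∀ᵐ ω ∂μ,
      q ≤ (μ[(fun ω' => if Ystar ω' = 1 then (1 : ℝ) else 0) |
            MeasurableSpace.comap Xstar inferInstance]) ω ∧
      (μ[(fun ω' => if Ystar ω' = 1 then (1 : ℝ) else 0) |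
            MeasurableSpace.comap Xstar inferInstance]) ω ≤ 1 - q) :
    ENNReal.ofReal (q * ρ₀) ≤ μ {ω | η₀ < max 0 (-((2 * Ystar ω - 1) * ⟪Xstar ω, β⟫))} := by
  have hm' : MeasurableSpace.comap Xstar inferInstance ≤ _ := hmeasXst.comap_le
  set Z : Ω → ℝ := fun ω => if Ystar ω = 1 then (1 : ℝ) else 0 with hZdef
  set TY : Set Ω := Ystar ⁻¹' {1} with hTYdef
  have hTY : MeasurableSet TY := hmeasYst (measurableSet_singleton 1)
  set TY0 : Set Ω := Ystar ⁻¹' {0} with hTY0def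
  have hTY0 : MeasurableSet TY0 := hmeasYst (measurableSet_singleton 0)
  have hZeq : Z = Set.indicator TY (fun _ => (1:ℝ)) := by
    funext ω
    by_cases h : Ystar ω = 1
    · simp [hZdef, hTYdef, h, Set.indicator_of_mem, Set.mem_preimage]
    · simp [hZdef, hTYdef, h, Set.indicator_of_notMem, Set.mem_preimage]
  have hZint : Integrable Z μ := by
    rw [hZeq]; exact (integrable_const (1:ℝ)).indicator hTY
  have hinner : Measurable fun v : EuclideanSpace ℝ (Fin p) => ⟪v, β⟫ :=
    (continuous_id.inner continuous_const).measurable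
  set sA : Set (EuclideanSpace ℝ (Fin p)) := {v | ⟪v, β⟫ < -η₀} with hsAdef
  set sB : Set (EuclideanSpace ℝ (Fin p)) := {v | η₀ < ⟪v, β⟫} with hsBdef
  have hsA : MeasurableSet sA := measurableSet_lt hinner measurable_const
  have hsB : MeasurableSet sB := measurableSet_lt measurable_const hinner
  set A : Set Ω := Xstar ⁻¹' sA with hAdef
  set B : Set Ω := Xstar ⁻¹' sB with hBdef
  have hAm' : MeasurableSet[MeasurableSpace.comap Xstar inferInstance] A := ⟨sA, hsA, rfl⟩
  have hBm' : MeasurableSet[MeasurableSpace.comap Xstar inferInstance] B := ⟨sB, hsB, rfl⟩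
  have hA : MeasurableSet A := hmeasXst hsA
  have hB : MeasurableSet B := hmeasXst hsB
  -- bound for C1 = A ∩ TY
  have hintA1 : (∫ ω in A, Z ω ∂μ) = (μ (A ∩ TY)).toReal := by
    rw [hZeq, setIntegral_indicator hTY, setIntegral_const]
    simp [Measure.real]
  have hintA2 : ∫ ω in A, Z ω ∂μ = ∫ ω in A, (μ[Z|MeasurableSpace.comap Xstar inferInstance]) ω ∂μ :=
    (setIntegral_condExp hm' hZint hAm').symm
  have hintA3 : q * (μ A).toReal ≤ ∫ ω in A, (μ[Z|MeasurableSpace.comap Xstar inferInstance]) ω ∂μ := by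
    have h0 : ∫ _ω in A, q ∂μ = q * (μ A).toReal := by
      rw [setIntegral_const, smul_eq_mul, mul_comm]; rfl
    rw [← h0]
    refine setIntegral_mono_ae ?_ ?_ ?_
    · exact integrableOn_const
    · exact integrable_condExp.integrableOn
    · exact hcond.mono fun ω h => h.1
  have hC1 : ENNReal.ofReal (q * (μ A).toReal) ≤ μ (A ∩ TY) := by
    refine ENNReal.ofReal_le_of_le_toReal ?_
    rw [← hintA1, hintA2]; exact hintA3
  -- bound for C2 = B ∩ TY0
  have hindTY0 : (fun ω => Set.indicator TY0 (fun _ => (1:ℝ)) ω) =ᵐ[μ] fun ω => 1 - Z ω := by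
    refine hYbin.mono fun ω h => ?_
    rcases h with h | h
    · have h1 : ω ∈ TY0 := by simp [hTY0def, h]
      have h2 : Ystar ω ≠ 1 := by rw [h]; norm_num
      simp [Set.indicator_of_mem h1, hZdef, h2]
    · have h1 : ω ∉ TY0 := by simp [hTY0def, h]
      simp [Set.indicator_of_notMem h1, hZdef, h]
  have hintB1 : (∫ ω in B, (1 - Z ω) ∂μ) = (μ (B ∩ TY0)).toReal := by
    rw [← setIntegral_congr_ae hB (hindTY0.mono fun ω h _ => h)]
    rw [setIntegral_indicator hTY0, setIntegral_const]
    simp [Measure.real]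
  have hintB2 : (∫ ω in B, (1 - Z ω) ∂μ)
      = (μ B).toReal - ∫ ω in B, (μ[Z|MeasurableSpace.comap Xstar inferInstance]) ω ∂μ := by
    rw [integral_sub (integrableOn_const (s := B) (μ := μ) (C := (1:ℝ)))
      hZint.integrableOn, setIntegral_const, setIntegral_condExp hm' hZint hBm']
    simp [Measure.real]
  have hintB3 : ∫ ω in B, (μ[Z|MeasurableSpace.comap Xstar inferInstance]) ω ∂μ ≤ (1 - q) * (μ B).toReal := by
    have h0 : ∫ _ω in B, (1 - q) ∂μ = (1 - q) * (μ B).toReal := by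
      rw [setIntegral_const, smul_eq_mul, mul_comm]; rfl
    rw [← h0]
    refine setIntegral_mono_ae ?_ ?_ ?_
    · exact integrable_condExp.integrableOn
    · exact integrableOn_const
    · exact hcond.mono fun ω h => h.2
  have hC2 : ENNReal.ofReal (q * (μ B).toReal) ≤ μ (B ∩ TY0) := by
    refine ENNReal.ofReal_le_of_le_toReal ?_
    rw [← hintB1, hintB2]
    nlinarith [hintB3, ENNReal.toReal_nonneg (a := μ B)]
  -- combine
  set S : Set Ω := {ω | η₀ < max 0 (-((2 * Ystar ω - 1) * ⟪Xstar ω, β⟫))} with hSdef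
  have hABdisj : Disjoint A B := by
    rw [Set.disjoint_left]
    intro ω hωA hωB
    have h1 : ⟪Xstar ω, β⟫ < -η₀ := hωA
    have h2 : η₀ < ⟪Xstar ω, β⟫ := hωB
    linarith
  have hdisj : Disjoint (A ∩ TY) (B ∩ TY0) :=
    (hABdisj.mono Set.inter_subset_left Set.inter_subset_left)
  have hsub : (A ∩ TY) ∪ (B ∩ TY0) ⊆ S := by
    intro ω hω
    rcases hω with ⟨hωA, hωY⟩ | ⟨hωB, hωY⟩
    · have hY : Ystar ω = 1 := hωY
      have h1 : ⟪Xstar ω, β⟫ < -η₀ := hωA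
      have h2 : η₀ < -((2 * Ystar ω - 1) * ⟪Xstar ω, β⟫) := by
        rw [hY]; ring_nf; linarith [h1]
      exact lt_of_lt_of_le h2 (le_max_right _ _)
    · have hY : Ystar ω = 0 := hωY
      have h1 : η₀ < ⟪Xstar ω, β⟫ := hωB
      have h2 : η₀ < -((2 * Ystar ω - 1) * ⟪Xstar ω, β⟫) := by
        rw [hY]; ring_nf; linarith [h1]
      exact lt_of_lt_of_le h2 (le_max_right _ _)
  have hunion : A ∪ B = {ω | η₀ < |⟪Xstar ω, β⟫|} := by
    ext ω
    simp only [hAdef, hBdef, hsAdef, hsBdef, Set.mem_union, Set.mem_preimage,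
      Set.mem_setOf_eq, lt_abs]
    constructor
    · rintro (h | h)
      · right; linarith
      · left; exact h
    · rintro (h | h)
      · right; exact h
      · left; linarith
  have hABmeas : (μ A).toReal + (μ B).toReal = (μ (A ∪ B)).toReal := by
    rw [measure_union hABdisj hB, ENNReal.toReal_add (measure_ne_top μ A) (measure_ne_top μ B)]
  have hABge : ρ₀ ≤ (μ (A ∪ B)).toReal := by
    rw [hunion]
    have h1 : ENNReal.ofReal ρ₀ ≤ μ {ω | η₀ < |⟪Xstar ω, β⟫|} := hball
    have h2 := ENNReal.toReal_mono (measure_ne_top μ _) h1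
    rwa [ENNReal.toReal_ofReal hρ0.le] at h2
  calc ENNReal.ofReal (q * ρ₀)
      ≤ ENNReal.ofReal (q * (μ A).toReal + q * (μ B).toReal) := by
        refine ENNReal.ofReal_le_ofReal ?_
        rw [← mul_add, hABmeas]
        exact mul_le_mul_of_nonneg_left hABge hq0.le
    _ = ENNReal.ofReal (q * (μ A).toReal) + ENNReal.ofReal (q * (μ B).toReal) :=
        ENNReal.ofReal_add (by positivity) (by positivity)
    _ ≤ μ (A ∩ TY) + μ (B ∩ TY0) := add_le_add hC1 hC2
    _ = μ ((A ∩ TY) ∪ (B ∩ TY0)) :=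
        (measure_union hdisj (hB.inter hTY0)).symm
    _ ≤ μ S := measure_mono hsub

end part_a

lemma hoeff_bern {p : ℝ} (hp0 : 0 ≤ p) (hp1 : p ≤ 1) {x : ℝ} (hx : 0 ≤ x) :
    1 - p + p * Real.exp (-x) ≤ Real.exp (x ^ 2 / 8 - p * x) := by
  set D : ℝ → ℝ := fun t => 1 - p + p * Real.exp (-t) with hD
  have hDpos : ∀ t, 0 < D t := by
    intro t
    have hE := Real.exp_pos (-t)
    show 0 < 1 - p + p * Real.exp (-t)
    rcases lt_or_ge (Real.exp (-t)) 1 with h | h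
    · nlinarith [mul_le_mul_of_nonneg_right hp1 (by linarith : (0:ℝ) ≤ 1 - Real.exp (-t))]
    · nlinarith [mul_le_mul_of_nonneg_left h hp0]
  have hDderiv : ∀ t : ℝ, HasDerivAt D (-(p * Real.exp (-t))) t := by
    intro t
    have h1 : HasDerivAt (fun t : ℝ => Real.exp (-t)) (Real.exp (-t) * (-1)) t :=
      (Real.hasDerivAt_exp (-t)).comp t ((hasDerivAt_id t).neg)
    have := ((h1.const_mul p).const_add (1 - p))
    refine this.congr_deriv ?_
    ring
  set G : ℝ → ℝ := fun t => t / 4 - p + p * Real.exp (-t) / D t with hG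
  have hGderiv : ∀ t : ℝ,
      HasDerivAt G (1 / 4 + ((-(p * Real.exp (-t))) * D t -
        p * Real.exp (-t) * (-(p * Real.exp (-t)))) / (D t) ^ 2) t := by
    intro t
    have h1 : HasDerivAt (fun t : ℝ => Real.exp (-t)) (Real.exp (-t) * (-1)) t :=
      (Real.hasDerivAt_exp (-t)).comp t ((hasDerivAt_id t).neg)
    have hN : HasDerivAt (fun t : ℝ => p * Real.exp (-t)) (-(p * Real.exp (-t))) t := by
      exact (h1.const_mul p).congr_deriv (by ring)
    have hq : HasDerivAt (fun t => p * Real.exp (-t) / D t)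
        (((-(p * Real.exp (-t))) * D t - p * Real.exp (-t) * (-(p * Real.exp (-t)))) / (D t) ^ 2)
        t := hN.div (hDderiv t) (hDpos t).ne'
    have hlin : HasDerivAt (fun t : ℝ => t / 4 - p) (1 / 4) t := by
      simpa using ((hasDerivAt_id t).div_const 4).sub_const p
    exact hlin.add hq
  have hGderiv_nonneg : ∀ t : ℝ, 0 ≤ 1 / 4 + ((-(p * Real.exp (-t))) * D t -
      p * Real.exp (-t) * (-(p * Real.exp (-t)))) / (D t) ^ 2 := by
    intro t
    have hDt := hDpos t
    have key : 1 / 4 + ((-(p * Real.exp (-t))) * D t -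
        p * Real.exp (-t) * (-(p * Real.exp (-t)))) / (D t) ^ 2
        = (p * Real.exp (-t) - D t / 2) ^ 2 / (D t) ^ 2 := by
      field_simp
      ring
    rw [key]; positivity
  have hGmono : MonotoneOn G (Set.Ici 0) := by
    refine monotoneOn_of_deriv_nonneg (convex_Ici 0) ?_ ?_ ?_
    · exact (fun t _ => ((hGderiv t).differentiableAt.continuousAt.continuousWithinAt))
    · exact fun t _ => (hGderiv t).differentiableAt.differentiableWithinAt
    · intro t _
      rw [(hGderiv t).deriv]
      exact hGderiv_nonneg t
  have hG0 : G 0 = 0 := by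
    simp only [hG, hD]
    norm_num
  have hGnonneg : ∀ t ∈ Set.Ici (0:ℝ), 0 ≤ G t := by
    intro t ht
    have := hGmono (Set.self_mem_Ici) ht ht
    rwa [hG0] at this
  set F : ℝ → ℝ := fun t => t ^ 2 / 8 - p * t - Real.log (D t) with hF
  have hFderiv : ∀ t : ℝ, HasDerivAt F (G t) t := by
    intro t
    have hlog : HasDerivAt (fun t => Real.log (D t)) ((-(p * Real.exp (-t))) / D t) t :=
      (hDderiv t).log (hDpos t).ne'
    have hsq : HasDerivAt (fun t : ℝ => t ^ 2 / 8 - p * t) (t / 4 - p) t := by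
      have h1 : HasDerivAt (fun t : ℝ => t ^ 2) (2 * t) t := by
        simpa using (hasDerivAt_pow 2 t)
      have := (h1.div_const 8).sub ((hasDerivAt_id t).const_mul p)
      exact this.congr_deriv (by ring)
    have := hsq.sub hlog
    refine this.congr_deriv ?_
    simp only [hG]
    ring
  have hFmono : MonotoneOn F (Set.Ici 0) := by
    refine monotoneOn_of_deriv_nonneg (convex_Ici 0) ?_ ?_ ?_
    · exact (fun t _ => ((hFderiv t).differentiableAt.continuousAt.continuousWithinAt))
    · exact fun t _ => (hFderiv t).differentiableAt.differentiableWithinAt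
    · intro t ht
      rw [(hFderiv t).deriv]
      exact hGnonneg t (le_of_lt (by simpa using ht))
  have hF0 : F 0 = 0 := by
    simp only [hF, hD]
    norm_num
  have hFx : 0 ≤ F x := by
    have := hFmono (Set.self_mem_Ici) hx hx
    rwa [hF0] at this
  have hlog : Real.log (D x) ≤ x ^ 2 / 8 - p * x := by
    simp only [hF] at hFx; linarith
  calc D x = Real.exp (Real.log (D x)) := (Real.exp_log (hDpos x)).symm
    _ ≤ Real.exp (x ^ 2 / 8 - p * x) := Real.exp_le_exp.mpr hlog


/-- **Small-ball lower bounds for the hinge-type statistic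
`max{0, −(2Y* − 1)⟨X*, β⟩}`.**  If `P(|⟨X*, β⟩| > η₀) ≥ ρ₀` for every unit `β` and
`q ≤ P(Y* = 1 ∣ X*) ≤ 1 − q` a.s., then with `ν = min(q, 1−q)ρ₀`, for every unit
`β`: (a) `P(max{0, −(2Y* − 1)⟨X*, β⟩} > η₀) ≥ ν`, hence
`E[max{0, −(2Y* − 1)⟨X*, β⟩}] ≥ η₀ν`; and (b) the empirical mean of the hinge
statistic over `M` i.i.d. copies is at least `η₀ν/2` with probability at least
`1 − exp(−Mν²/2)`. -/
theorem stmt9 {Ω : Type*} [MeasurableSpace Ω] (μ : Measure Ω) [IsProbabilityMeasure μ]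
    {M p : ℕ} (hM : 1 ≤ M)
    (Xs : Fin M → Ω → EuclideanSpace ℝ (Fin p)) (Ys : Fin M → Ω → ℝ)
    (Xstar : Ω → EuclideanSpace ℝ (Fin p)) (Ystar : Ω → ℝ)
    (hmeasXs : ∀ i, Measurable (Xs i)) (hmeasYs : ∀ i, Measurable (Ys i))
    (hmeasXst : Measurable Xstar) (hmeasYst : Measurable Ystar)
    (hiid : iIndepFun (fun i ω => (Xs i ω, Ys i ω)) μ)
    (hident : ∀ i, Measure.map (fun ω => (Xs i ω, Ys i ω)) μ
        = Measure.map (fun ω => (Xstar ω, Ystar ω)) μ)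
    (hYbin : ∀ᵐ ω ∂μ, Ystar ω = 0 ∨ Ystar ω = 1)
    (η₀ ρ₀ q : ℝ) (hη : 0 < η₀) (hρ0 : 0 < ρ₀) (hρ1 : ρ₀ ≤ 1)
    (hq0 : 0 < q) (hq1 : q < 1)
    (hball : ∀ β : EuclideanSpace ℝ (Fin p), ‖β‖ = 1 →
      ENNReal.ofReal ρ₀ ≤ μ {ω | η₀ < |⟪Xstar ω, β⟫|})
    (hcond : ∀ᵐ ω ∂μ,
      q ≤ (μ[(fun ω' => if Ystar ω' = 1 then (1 : ℝ) else 0) |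
            MeasurableSpace.comap Xstar inferInstance]) ω ∧
      (μ[(fun ω' => if Ystar ω' = 1 then (1 : ℝ) else 0) |
            MeasurableSpace.comap Xstar inferInstance]) ω ≤ 1 - q) :
    ∀ β : EuclideanSpace ℝ (Fin p), ‖β‖ = 1 →
      (ENNReal.ofReal (min q (1 - q) * ρ₀) ≤
        μ {ω | η₀ < max 0 (-((2 * Ystar ω - 1) * ⟪Xstar ω, β⟫))}) ∧
      (ENNReal.ofReal (η₀ * (min q (1 - q) * ρ₀)) ≤
        ∫⁻ ω, ENNReal.ofReal (max 0 (-((2 * Ystar ω - 1) * ⟪Xstar ω, β⟫))) ∂μ) ∧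
      (ENNReal.ofReal (1 - Real.exp (-(M * (min q (1 - q) * ρ₀) ^ 2) / 2)) ≤
        μ {ω | η₀ * (min q (1 - q) * ρ₀) / 2 ≤
          (M : ℝ)⁻¹ * ∑ i, max 0 (-((2 * Ys i ω - 1) * ⟪Xs i ω, β⟫))}) := by
  intro β hβ
  set ν : ℝ := min q (1 - q) * ρ₀ with hνdef
  have hν0 : 0 < ν := by
    apply mul_pos _ hρ0
    exact lt_min hq0 (by linarith)
  have hν1 : min q (1 - q) ≤ q := min_le_left _ _
  -- part (a) first claim
  set Sstar : Set Ω := {ω | η₀ < max 0 (-((2 * Ystar ω - 1) * ⟪Xstar ω, β⟫))} with hSdef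
  have hkey : ENNReal.ofReal (q * ρ₀) ≤ μ Sstar :=
    partA_key μ Xstar Ystar hmeasXst hmeasYst hYbin η₀ ρ₀ q hη hρ0 hq0 hq1 β (hball β hβ) hcond
  have ha1 : ENNReal.ofReal ν ≤ μ Sstar := by
    refine le_trans (ENNReal.ofReal_le_ofReal ?_) hkey
    exact mul_le_mul_of_nonneg_right hν1 hρ0.le
  -- measurability of the hinge
  have hinner : Measurable fun v : EuclideanSpace ℝ (Fin p) => ⟪v, β⟫ :=
    (continuous_id.inner continuous_const).measurable
  set φ : (EuclideanSpace ℝ (Fin p)) × ℝ → ℝ :=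
    fun z => max 0 (-((2 * z.2 - 1) * ⟪z.1, β⟫)) with hφdef
  have hφ : Measurable φ :=
    measurable_const.max ((((measurable_snd.const_mul 2).sub measurable_const).mul
      (hinner.comp measurable_fst)).neg)
  have hhinge : Measurable fun ω => max 0 (-((2 * Ystar ω - 1) * ⟪Xstar ω, β⟫)) :=
    hφ.comp (hmeasXst.prodMk hmeasYst)
  have hSmeas : MeasurableSet Sstar := measurableSet_lt measurable_const hhinge
  refine ⟨ha1, ?_, ?_⟩
  -- part (a) second claim
  · have hmarkov := mul_meas_ge_le_lintegral₀ (μ := μ)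
      (f := fun ω => ENNReal.ofReal (max 0 (-((2 * Ystar ω - 1) * ⟪Xstar ω, β⟫))))
      hhinge.ennreal_ofReal.aemeasurable (ENNReal.ofReal η₀)
    have hsub : Sstar ⊆ {ω | ENNReal.ofReal η₀ ≤
        ENNReal.ofReal (max 0 (-((2 * Ystar ω - 1) * ⟪Xstar ω, β⟫)))} := by
      intro ω hω
      exact ENNReal.ofReal_le_ofReal (le_of_lt hω)
    calc ENNReal.ofReal (η₀ * ν) = ENNReal.ofReal η₀ * ENNReal.ofReal ν :=
          ENNReal.ofReal_mul hη.le
      _ ≤ ENNReal.ofReal η₀ * μ Sstar := mul_le_mul_right ha1 _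
      _ ≤ ENNReal.ofReal η₀ * μ {ω | ENNReal.ofReal η₀ ≤
            ENNReal.ofReal (max 0 (-((2 * Ystar ω - 1) * ⟪Xstar ω, β⟫)))} :=
          mul_le_mul_right (measure_mono hsub) _
      _ ≤ _ := hmarkov
  -- part (b)
  · set Bset : Set ((EuclideanSpace ℝ (Fin p)) × ℝ) := {z | η₀ < φ z} with hBsetdef
    have hBset : MeasurableSet Bset := measurableSet_lt measurable_const hφ
    set Zf : Fin M → Ω → ℝ :=
      fun i ω => Set.indicator Bset (fun _ => (1:ℝ)) (Xs i ω, Ys i ω) with hZfdef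
    have hindmeas : Measurable (Set.indicator Bset (fun _ => (1:ℝ))) :=
      measurable_const.indicator hBset
    have hpairmeas : ∀ i, Measurable fun ω => (Xs i ω, Ys i ω) :=
      fun i => (hmeasXs i).prodMk (hmeasYs i)
    have hZmeas : ∀ i, Measurable (Zf i) := fun i => hindmeas.comp (hpairmeas i)
    have hZind : iIndepFun Zf μ :=
      hiid.comp (fun _ => Set.indicator Bset (fun _ => (1:ℝ))) (fun _ => hindmeas)
    -- the preimage sets all have the same measure
    set Ai : Fin M → Set Ω := fun i => (fun ω => (Xs i ω, Ys i ω)) ⁻¹' Bset with hAidef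
    have hAimeas : ∀ i, MeasurableSet (Ai i) := fun i => (hpairmeas i) hBset
    have hSstar_pre : Sstar = (fun ω => (Xstar ω, Ystar ω)) ⁻¹' Bset := rfl
    have hAi : ∀ i, μ (Ai i) = μ Sstar := by
      intro i
      rw [hSstar_pre, hAidef]
      rw [← Measure.map_apply (hpairmeas i) hBset,
        ← Measure.map_apply (hmeasXst.prodMk hmeasYst) hBset, hident i]
    set pR : ℝ := (μ Sstar).toReal with hpRdef
    have hpR0 : 0 ≤ pR := ENNReal.toReal_nonneg
    have hpR1 : pR ≤ 1 := by
      rw [hpRdef]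
      exact ENNReal.toReal_le_of_le_ofReal zero_le_one (by simpa using prob_le_one)
    have hpRν : ν ≤ pR := by
      have := ENNReal.toReal_mono (measure_ne_top μ Sstar) ha1
      rwa [ENNReal.toReal_ofReal hν0.le] at this
    -- Zf i as indicator of Ai i
    have hZfind : ∀ i, Zf i = Set.indicator (Ai i) (fun _ => (1:ℝ)) := by
      intro i; funext ω
      by_cases h : (Xs i ω, Ys i ω) ∈ Bset
      · rw [hZfdef]
        simp only [Set.indicator_of_mem h]
        rw [Set.indicator_of_mem (by exact h)]
      · rw [hZfdef]
        simp only [Set.indicator_of_notMem h]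
        rw [Set.indicator_of_notMem (by exact h)]
    have hZfint : ∀ i, Integrable (Zf i) μ := by
      intro i; rw [hZfind i]; exact (integrable_const (1:ℝ)).indicator (hAimeas i)
    have hZfintegral : ∀ i, ∫ ω, Zf i ω ∂μ = pR := by
      intro i
      rw [hZfind i]
      rw [integral_indicator_const (1:ℝ) (hAimeas i), measureReal_def, hAi i]
      simp [hpRdef]
    have hZf01 : ∀ i ω, Zf i ω = 0 ∨ Zf i ω = 1 := by
      intro i ω
      by_cases h : (Xs i ω, Ys i ω) ∈ Bset
      · right; rw [hZfdef]; simp [Set.indicator_of_mem h]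
      · left; rw [hZfdef]; simp [Set.indicator_of_notMem h]
    -- exponential rewriting
    have hexp_eq : ∀ (t : ℝ) i, (fun ω => Real.exp (t * Zf i ω))
        = fun ω => 1 + (Real.exp t - 1) * Zf i ω := by
      intro t i; funext ω
      rcases hZf01 i ω with h | h <;> simp [h]
    have hexp_int : ∀ (t : ℝ) i, Integrable (fun ω => Real.exp (t * Zf i ω)) μ := by
      intro t i
      rw [hexp_eq t i]
      exact (integrable_const (1:ℝ)).add ((hZfint i).const_mul _)
    have hmgf : ∀ (t : ℝ) i, mgf (Zf i) μ t = 1 + (Real.exp t - 1) * pR := by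
      intro t i
      rw [mgf, hexp_eq t i, integral_add (integrable_const 1) ((hZfint i).const_mul _),
        integral_const, integral_const_mul, hZfintegral i]
      simp
    -- Chernoff bound
    set t : ℝ := -(2 * ν) with htdef
    have ht : t ≤ 0 := by rw [htdef]; linarith
    set ε : ℝ := M * ν / 2 with hεdef
    have hSum_int : Integrable (fun ω => Real.exp (t * (∑ i, Zf i) ω)) μ :=
      iIndepFun.integrable_exp_mul_sum hZind hZmeas (fun i _ => hexp_int t i)
    have hcher := measure_le_le_exp_mul_mgf (X := ∑ i, Zf i) (μ := μ) ε ht hSum_int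
    have hmgfsum : mgf (∑ i, Zf i) μ t = (1 + (Real.exp t - 1) * pR) ^ M := by
      rw [hZind.mgf_sum hZmeas Finset.univ]
      rw [Finset.prod_congr rfl (fun i _ => hmgf t i), Finset.prod_const, Finset.card_univ,
        Fintype.card_fin]
    -- real-number estimate
    have hfac : 1 + (Real.exp t - 1) * pR ≤ Real.exp (-(3 * ν ^ 2 / 2)) := by
      have h1 : 1 + (Real.exp t - 1) * pR = 1 - pR + pR * Real.exp (-(2 * ν)) := by
        rw [htdef]; ring
      rw [h1]
      refine le_trans (hoeff_bern hpR0 hpR1 (by positivity : (0:ℝ) ≤ 2 * ν)) ?_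
      refine Real.exp_le_exp.mpr ?_
      have : ν * (2 * ν) ≤ pR * (2 * ν) :=
        mul_le_mul_of_nonneg_right hpRν (by positivity)
      nlinarith
    have hfacpos : 0 ≤ 1 + (Real.exp t - 1) * pR := by
      have h1 : 1 + (Real.exp t - 1) * pR = 1 - pR + pR * Real.exp (-(2 * ν)) := by
        rw [htdef]; ring
      rw [h1]
      nlinarith [mul_nonneg hpR0 (Real.exp_pos (-(2 * ν))).le]
    have hnum : Real.exp (-t * ε) * mgf (∑ i, Zf i) μ t
        ≤ Real.exp (-(M * ν ^ 2) / 2) := by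
      rw [hmgfsum]
      calc Real.exp (-t * ε) * (1 + (Real.exp t - 1) * pR) ^ M
          ≤ Real.exp (-t * ε) * (Real.exp (-(3 * ν ^ 2 / 2))) ^ M := by
            refine mul_le_mul_of_nonneg_left ?_ (Real.exp_pos _).le
            exact pow_le_pow_left₀ hfacpos hfac M
        _ = Real.exp (-t * ε + M * (-(3 * ν ^ 2 / 2))) := by
            rw [← Real.exp_nat_mul, ← Real.exp_add]
        _ = Real.exp (-(M * ν ^ 2) / 2) := by
            congr 1
            rw [htdef, hεdef]; ring
    -- from toReal bound to ENNReal bound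
    set bad : Set Ω := {ω | (∑ i, Zf i) ω ≤ ε} with hbaddef
    have hbadmeas : MeasurableSet bad := by
      have h : Measurable (∑ i, Zf i) := by
        rw [Finset.sum_fn]
        exact Finset.measurable_sum Finset.univ (fun i _ => hZmeas i)
      exact measurableSet_le h measurable_const
    have hbadle : μ bad ≤ ENNReal.ofReal (Real.exp (-(M * ν ^ 2) / 2)) := by
      rw [← ENNReal.ofReal_toReal (measure_ne_top μ bad)]
      exact ENNReal.ofReal_le_ofReal (le_trans hcher hnum)
    -- inclusion of the good event in the target
    have hMpos : (0:ℝ) < M := by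
      have : (1:ℕ) ≤ M := hM
      exact_mod_cast Nat.lt_of_lt_of_le Nat.zero_lt_one this
    have hsubT : badᶜ ⊆ {ω | η₀ * ν / 2 ≤
        (M : ℝ)⁻¹ * ∑ i, max 0 (-((2 * Ys i ω - 1) * ⟪Xs i ω, β⟫))} := by
      intro ω hω
      have hωS : ε < (∑ i, Zf i) ω := lt_of_not_ge hω
      have hterm : ∀ i, η₀ * Zf i ω ≤ max 0 (-((2 * Ys i ω - 1) * ⟪Xs i ω, β⟫)) := by
        intro i
        by_cases h : (Xs i ω, Ys i ω) ∈ Bset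
        · have hz : Zf i ω = 1 := by rw [hZfdef]; simp [Set.indicator_of_mem h]
          rw [hz, mul_one]
          exact le_of_lt h
        · have hz : Zf i ω = 0 := by rw [hZfdef]; simp [Set.indicator_of_notMem h]
          rw [hz, mul_zero]
          exact le_max_left _ _
      have hsum : η₀ * (∑ i, Zf i) ω ≤ ∑ i, max 0 (-((2 * Ys i ω - 1) * ⟪Xs i ω, β⟫)) := by
        rw [Finset.sum_apply, Finset.mul_sum]
        exact Finset.sum_le_sum (fun i _ => hterm i)
      have h1 : η₀ * ε ≤ η₀ * (∑ i, Zf i) ω :=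
        mul_le_mul_of_nonneg_left hωS.le hη.le
      show η₀ * ν / 2 ≤ (M : ℝ)⁻¹ * ∑ i, max 0 (-((2 * Ys i ω - 1) * ⟪Xs i ω, β⟫))
      have h2 : η₀ * ν / 2 = (M : ℝ)⁻¹ * (η₀ * ε) := by
        rw [hεdef]; field_simp
      rw [h2]
      exact mul_le_mul_of_nonneg_left (le_trans h1 hsum) (by positivity)
    calc ENNReal.ofReal (1 - Real.exp (-(M * ν ^ 2) / 2))
        = 1 - ENNReal.ofReal (Real.exp (-(M * ν ^ 2) / 2)) := by
          rw [ENNReal.ofReal_sub _ (Real.exp_pos _).le, ENNReal.ofReal_one]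
      _ ≤ 1 - μ bad := tsub_le_tsub_left hbadle 1
      _ = μ badᶜ := by
          rw [measure_compl hbadmeas (measure_ne_top μ bad), measure_univ]
      _ ≤ _ := measure_mono hsubT
end
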